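/- Suppose A ∈ ℝ^{m×N} satisfies the ℓ_ω^2-BRNSP of order s ≥ ‖ω‖_∞² with constants 0 < ρ < 1 and τ > 0. Let x ∈ ℝ^N, y = Ax + e with ‖e‖₂ ≤ η, and let x̂ minimize ‖z‖_{2,1}^{(ω)} subject to ‖Az − y‖₂ ≤ η. Then ‖x − x̂‖_{2,1}^{(ω)} ≤ 2C_ρ σ_s(x)_{2,1}^{(ω)} + 2D_{ρ,τ}√s η and ‖x − x̂‖₂ ≤ 2C_ρ σ_s(x)_{2,1}^{(ω)}/√s + 2D_{ρ,τ} η, with C_ρ = (1+ρ)²/(1−ρ) and D_{ρ,τ} = τ(3+ρ)/(1−ρ). -/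

import Mathlib

open Finset

noncomputable def l2 {n : Type*} [Fintype n] (v : n → ℝ) : ℝ := Real.sqrt (∑ i, (v i) ^ 2)

variable {B : ℕ} {d : Fin B → ℕ}

/-- ℓ² norm of the block `b` of the block vector `x`. -/
noncomputable def bn (x : ((b : Fin B) × Fin (d b)) → ℝ) (b : Fin B) : ℝ :=
  Real.sqrt (∑ i : Fin (d b), (x ⟨b, i⟩) ^ 2)

/-- Weighted block ℓ¹ norm `‖x‖_{2,1}^{(ω)}`. -/
noncomputable def n21 (ω : Fin B → ℝ) (x : ((b : Fin B) × Fin (d b)) → ℝ) : ℝ :=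
  ∑ b, ω b * bn x b

/-- Weighted block (2,p) norm `‖x‖_{2,p}^{(ω)}` (real exponents). -/
noncomputable def n2p (ω : Fin B → ℝ) (p : ℝ) (x : ((b : Fin B) × Fin (d b)) → ℝ) : ℝ :=
  (∑ b, ω b ^ (2 - p) * bn x b ^ p) ^ (1 / p)

/-- Restriction of `x` to the blocks in `S` (zero outside). -/
def rs (S : Finset (Fin B)) (x : ((b : Fin B) × Fin (d b)) → ℝ) :
    ((b : Fin B) × Fin (d b)) → ℝ :=
  fun j => if j.1 ∈ S then x j else 0

/-- Weighted cardinality `ω(S) = ∑_{b∈S} ω_b²`. -/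
def wCard (ω : Fin B → ℝ) (S : Finset (Fin B)) : ℝ := ∑ b ∈ S, ω b ^ 2

/-- Weighted block sparsity `‖x‖₀^{(ω)}`. -/
noncomputable def wspar (ω : Fin B → ℝ) (x : ((b : Fin B) × Fin (d b)) → ℝ) : ℝ :=
  ∑ b, if bn x b = 0 then 0 else ω b ^ 2

/-- Best weighted `s`-block approximation error in the `‖·‖_{2,1}^{(ω)}` norm. -/
noncomputable def sigmaS (ω : Fin B → ℝ) (s : ℝ) (x : ((b : Fin B) × Fin (d b)) → ℝ) : ℝ :=
  sInf {t | ∃ z, wspar ω z ≤ s ∧ t = n21 ω (x - z)}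

/-- Weighted block restricted isometry property of order `t` with constant `δ`. -/
noncomputable def WBRIP {m : ℕ} (A : Matrix (Fin m) ((b : Fin B) × Fin (d b)) ℝ)
    (ω : Fin B → ℝ) (t δ : ℝ) : Prop :=
  ∀ x : ((b : Fin B) × Fin (d b)) → ℝ, wspar ω x ≤ t →
    (1 - δ) * l2 x ^ 2 ≤ l2 (A.mulVec x) ^ 2 ∧ l2 (A.mulVec x) ^ 2 ≤ (1 + δ) * l2 x ^ 2


section Helpers

lemma my_cs {ι : Type*} (s : Finset ι) (f g : ι → ℝ) :
    ∑ i ∈ s, f i * g i ≤ Real.sqrt (∑ i ∈ s, f i ^ 2) * Real.sqrt (∑ i ∈ s, g i ^ 2) := by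
  calc ∑ i ∈ s, f i * g i ≤ |∑ i ∈ s, f i * g i| := le_abs_self _
    _ = Real.sqrt ((∑ i ∈ s, f i * g i) ^ 2) := (Real.sqrt_sq_eq_abs _).symm
    _ ≤ Real.sqrt ((∑ i ∈ s, f i ^ 2) * ∑ i ∈ s, g i ^ 2) :=
        Real.sqrt_le_sqrt (Finset.sum_mul_sq_le_sq_mul_sq s f g)
    _ = _ := Real.sqrt_mul (Finset.sum_nonneg fun i _ => sq_nonneg _) _

lemma l2_nonneg {n : Type*} [Fintype n] (v : n → ℝ) : 0 ≤ l2 v := Real.sqrt_nonneg _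

lemma l2_sq_eq {n : Type*} [Fintype n] (v : n → ℝ) : l2 v ^ 2 = ∑ i, (v i) ^ 2 :=
  Real.sq_sqrt (Finset.sum_nonneg fun _ _ => sq_nonneg _)

lemma l2_triangle {n : Type*} [Fintype n] (u w : n → ℝ) : l2 (u + w) ≤ l2 u + l2 w := by
  have hcs : ∑ i, u i * w i ≤ l2 u * l2 w := my_cs Finset.univ u w
  have h1 : l2 (u + w) ^ 2 ≤ (l2 u + l2 w) ^ 2 := by
    rw [l2_sq_eq]
    have e1 : ∑ i, (u + w) i ^ 2 = (∑ i, u i ^ 2) + 2 * (∑ i, u i * w i) + ∑ i, w i ^ 2 := by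
      rw [Finset.mul_sum, ← Finset.sum_add_distrib, ← Finset.sum_add_distrib]
      exact Finset.sum_congr rfl fun i _ => by simp only [Pi.add_apply]; ring
    rw [e1]
    have e2 : (l2 u + l2 w) ^ 2 = l2 u ^ 2 + 2 * (l2 u * l2 w) + l2 w ^ 2 := by ring
    rw [e2, l2_sq_eq, l2_sq_eq]
    linarith
  nlinarith [l2_nonneg (u + w), l2_nonneg u, l2_nonneg w]

lemma l2_neg {n : Type*} [Fintype n] (v : n → ℝ) : l2 (-v) = l2 v := by simp [l2]

lemma bn_nonneg (x : ((b : Fin B) × Fin (d b)) → ℝ) (b : Fin B) : 0 ≤ bn x b :=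
  Real.sqrt_nonneg _

lemma bn_eq_l2 (x : ((b : Fin B) × Fin (d b)) → ℝ) (b : Fin B) :
    bn x b = l2 (fun i : Fin (d b) => x ⟨b, i⟩) := rfl

lemma bn_triangle (u w : ((b : Fin B) × Fin (d b)) → ℝ) (b : Fin B) :
    bn (u + w) b ≤ bn u b + bn w b := by
  rw [bn_eq_l2, bn_eq_l2, bn_eq_l2]
  exact l2_triangle _ _

lemma bn_neg (u : ((b : Fin B) × Fin (d b)) → ℝ) (b : Fin B) : bn (-u) b = bn u b := by
  simp [bn]

lemma n21_nonneg (ω : Fin B → ℝ) (hω : ∀ b, 1 ≤ ω b) (x : ((b : Fin B) × Fin (d b)) → ℝ) :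
    0 ≤ n21 ω x :=
  Finset.sum_nonneg fun b _ => mul_nonneg (by linarith [hω b]) (bn_nonneg x b)

lemma n21_triangle (ω : Fin B → ℝ) (hω : ∀ b, 1 ≤ ω b)
    (u w : ((b : Fin B) × Fin (d b)) → ℝ) : n21 ω (u + w) ≤ n21 ω u + n21 ω w := by
  have h : ∑ b, (ω b * bn u b + ω b * bn w b) = n21 ω u + n21 ω w := by
    rw [Finset.sum_add_distrib]; rfl
  rw [n21, ← h]
  refine Finset.sum_le_sum fun b _ => ?_
  have h1 := bn_triangle u w b
  have hb := hω b
  nlinarith [bn_nonneg u b, bn_nonneg w b]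

lemma n21_neg (ω : Fin B → ℝ) (u : ((b : Fin B) × Fin (d b)) → ℝ) :
    n21 ω (-u) = n21 ω u := by
  rw [n21, n21]; exact Finset.sum_congr rfl fun b _ => by rw [bn_neg]

lemma l2_sq_blocks (v : ((b : Fin B) × Fin (d b)) → ℝ) :
    l2 v ^ 2 = ∑ b, bn v b ^ 2 := by
  rw [l2_sq_eq, ← Finset.univ_sigma_univ, Finset.sum_sigma]
  exact Finset.sum_congr rfl fun b _ =>
    (Real.sq_sqrt (Finset.sum_nonneg fun _ _ => sq_nonneg _)).symm

lemma bn_rs (S : Finset (Fin B)) (x : ((b : Fin B) × Fin (d b)) → ℝ) (b : Fin B) :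
    bn (rs S x) b = if b ∈ S then bn x b else 0 := by
  by_cases hb : b ∈ S <;> simp [bn, rs, hb]

lemma n21_split (ω : Fin B → ℝ) (S : Finset (Fin B)) (x : ((b : Fin B) × Fin (d b)) → ℝ) :
    n21 ω x = n21 ω (rs S x) + n21 ω (rs Sᶜ x) := by
  rw [n21, n21, n21, ← Finset.sum_add_distrib]
  refine Finset.sum_congr rfl fun b _ => ?_
  rw [bn_rs, bn_rs]
  by_cases hb : b ∈ S <;> simp [hb]

lemma rs_sub (S : Finset (Fin B)) (u w : ((b : Fin B) × Fin (d b)) → ℝ) :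
    rs S (u - w) = rs S u - rs S w := by
  funext j; by_cases h : j.1 ∈ S <;> simp [rs, h]

lemma l2_split_le (S : Finset (Fin B)) (v : ((b : Fin B) × Fin (d b)) → ℝ) :
    l2 v ≤ l2 (rs S v) + l2 (rs Sᶜ v) := by
  have h : l2 v ^ 2 = l2 (rs S v) ^ 2 + l2 (rs Sᶜ v) ^ 2 := by
    rw [l2_sq_blocks, l2_sq_blocks, l2_sq_blocks, ← Finset.sum_add_distrib]
    refine Finset.sum_congr rfl fun b _ => ?_
    rw [bn_rs, bn_rs]
    by_cases hb : b ∈ S <;> simp [hb]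
  nlinarith [l2_nonneg v, l2_nonneg (rs S v), l2_nonneg (rs Sᶜ v),
    mul_nonneg (l2_nonneg (rs S v)) (l2_nonneg (rs Sᶜ v))]

lemma n21_rs_eq (ω : Fin B → ℝ) (S : Finset (Fin B)) (v : ((b : Fin B) × Fin (d b)) → ℝ) :
    n21 ω (rs S v) = ∑ b ∈ S, ω b * bn v b := by
  rw [n21]
  simp only [bn_rs, mul_ite, mul_zero]
  rw [Finset.sum_ite_mem, Finset.univ_inter]

lemma l2_rs_sq_eq (S : Finset (Fin B)) (v : ((b : Fin B) × Fin (d b)) → ℝ) :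
    l2 (rs S v) ^ 2 = ∑ b ∈ S, bn v b ^ 2 := by
  rw [l2_sq_blocks]
  simp only [bn_rs, ite_pow, ne_eq, OfNat.ofNat_ne_zero, not_false_eq_true, zero_pow]
  rw [Finset.sum_ite_mem, Finset.univ_inter]

lemma n21_rs_le_sqrt_l2 (ω : Fin B → ℝ) (S : Finset (Fin B))
    (v : ((b : Fin B) × Fin (d b)) → ℝ) :
    n21 ω (rs S v) ≤ Real.sqrt (wCard ω S) * l2 (rs S v) := by
  rw [n21_rs_eq]
  have h2 : l2 (rs S v) = Real.sqrt (∑ b ∈ S, bn v b ^ 2) := by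
    rw [← Real.sqrt_sq (l2_nonneg (rs S v)), l2_rs_sq_eq]
  rw [h2, wCard]
  exact my_cs S ω (bn v)

lemma n21_rs_le (ω : Fin B → ℝ) (hω : ∀ b, 1 ≤ ω b) (S : Finset (Fin B))
    (v : ((b : Fin B) × Fin (d b)) → ℝ) : n21 ω (rs S v) ≤ n21 ω v := by
  rw [n21_rs_eq, n21]
  exact Finset.sum_le_sum_of_subset_of_nonneg (Finset.subset_univ _)
    (fun b _ _ => mul_nonneg (le_trans zero_le_one (hω b)) (bn_nonneg v b))

end Helpers

set_option maxHeartbeats 2000000 in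
theorem stmt5 {m : ℕ} (A : Matrix (Fin m) ((b : Fin B) × Fin (d b)) ℝ)
    (ω : Fin B → ℝ) (hω : ∀ b, 1 ≤ ω b) (s ρ τ : ℝ)
    (hρ0 : 0 < ρ) (hρ1 : ρ < 1) (hτ : 0 < τ)
    (hs : ∀ b, ω b ^ 2 ≤ s)
    (hNSP : ∀ (v : ((b : Fin B) × Fin (d b)) → ℝ) (S : Finset (Fin B)), wCard ω S ≤ s →
      l2 (rs S v) ≤ ρ / Real.sqrt s * n21 ω (rs Sᶜ v) + τ * l2 (A.mulVec v))
    (x : ((b : Fin B) × Fin (d b)) → ℝ) (e : Fin m → ℝ) (η : ℝ) (he : l2 e ≤ η)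
    (xh : ((b : Fin B) × Fin (d b)) → ℝ)
    (hfeas : l2 (A.mulVec xh - (A.mulVec x + e)) ≤ η)
    (hmin : ∀ z, l2 (A.mulVec z - (A.mulVec x + e)) ≤ η → n21 ω xh ≤ n21 ω z) :
    n21 ω (x - xh) ≤
        2 * ((1 + ρ) ^ 2 / (1 - ρ)) * sigmaS ω s x
          + 2 * (τ * (3 + ρ) / (1 - ρ)) * Real.sqrt s * η ∧
    l2 (x - xh) ≤
        2 * ((1 + ρ) ^ 2 / (1 - ρ)) * sigmaS ω s x / Real.sqrt s
          + 2 * (τ * (3 + ρ) / (1 - ρ)) * η := by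
  rcases isEmpty_or_nonempty (Fin B) with hB | hB
  · haveI := hB
    have hσ0 : 0 ≤ sigmaS ω s x := by
      unfold sigmaS
      exact Real.sInf_nonneg (by rintro t ⟨z, _, rfl⟩; exact n21_nonneg ω hω _)
    have hη0 : 0 ≤ η := le_trans (l2_nonneg e) he
    have h1ρ : 0 < 1 - ρ := by linarith
    have hC : 0 ≤ (1 + ρ) ^ 2 / (1 - ρ) := by positivity
    have hD : 0 ≤ τ * (3 + ρ) / (1 - ρ) := by
      apply div_nonneg _ h1ρ.le
      nlinarith
    have hn : n21 ω (x - xh) = 0 := by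
      rw [n21, Finset.univ_eq_empty, Finset.sum_empty]
    have hl : l2 (x - xh) = 0 := by
      have h2 : l2 (x - xh) ^ 2 = 0 := by
        rw [l2_sq_blocks, Finset.univ_eq_empty, Finset.sum_empty]
      exact pow_eq_zero_iff two_ne_zero |>.mp h2
    have q1 : 0 ≤ 2 * ((1 + ρ) ^ 2 / (1 - ρ)) * sigmaS ω s x :=
      mul_nonneg (by linarith) hσ0
    have q2 : 0 ≤ 2 * (τ * (3 + ρ) / (1 - ρ)) * Real.sqrt s * η :=
      mul_nonneg (mul_nonneg (by linarith) (Real.sqrt_nonneg s)) hη0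
    have q3 : 0 ≤ 2 * ((1 + ρ) ^ 2 / (1 - ρ)) * sigmaS ω s x / Real.sqrt s :=
      div_nonneg q1 (Real.sqrt_nonneg s)
    have q4 : 0 ≤ 2 * (τ * (3 + ρ) / (1 - ρ)) * η := mul_nonneg (by linarith) hη0
    constructor
    · rw [hn]; linarith
    · rw [hl]; linarith
  · obtain ⟨b0⟩ := hB
    have h1ρ : 0 < 1 - ρ := by linarith
    have h1ρ' : (0:ℝ) ≤ 1 + ρ := by linarith
    have hs1 : (1:ℝ) ≤ s := by nlinarith [hω b0, hs b0]
    have hs0 : (0:ℝ) < s := by linarith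
    have hsq : 0 < Real.sqrt s := Real.sqrt_pos.mpr hs0
    have hη0 : 0 ≤ η := le_trans (l2_nonneg e) he
    have hσ0 : 0 ≤ sigmaS ω s x := by
      unfold sigmaS
      exact Real.sInf_nonneg (by rintro t ⟨z, _, rfl⟩; exact n21_nonneg ω hω _)
    obtain ⟨v, hv⟩ : ∃ v, v = x - xh := ⟨_, rfl⟩
    rw [← hv]
    have hAv : l2 (A.mulVec v) ≤ 2 * η := by
      rw [hv, Matrix.mulVec_sub]
      have heq : A.mulVec x - A.mulVec xh
          = (-(A.mulVec xh - (A.mulVec x + e))) + (-e) := by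
        funext i
        simp only [Pi.sub_apply, Pi.add_apply, Pi.neg_apply]
        ring
      rw [heq]
      calc l2 ((-(A.mulVec xh - (A.mulVec x + e))) + (-e))
          ≤ l2 (-(A.mulVec xh - (A.mulVec x + e))) + l2 (-e) := l2_triangle _ _
        _ = l2 (A.mulVec xh - (A.mulVec x + e)) + l2 e := by rw [l2_neg, l2_neg]
        _ ≤ 2 * η := by linarith
    have hNSP' : ∀ S : Finset (Fin B), wCard ω S ≤ s →
        n21 ω (rs S v) ≤ ρ * n21 ω (rs Sᶜ v) + 2 * τ * Real.sqrt s * η := by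
      intro S hS
      have h1 := hNSP v S hS
      have hA' : τ * l2 (A.mulVec v) ≤ τ * (2 * η) := mul_le_mul_of_nonneg_left hAv hτ.le
      have h4 : l2 (rs S v) ≤ ρ / Real.sqrt s * n21 ω (rs Sᶜ v) + τ * (2 * η) := by
        linarith
      have h5 : n21 ω (rs S v) ≤ Real.sqrt s * l2 (rs S v) :=
        le_trans (n21_rs_le_sqrt_l2 ω S v)
          (mul_le_mul_of_nonneg_right (Real.sqrt_le_sqrt hS) (l2_nonneg _))
      have h6 : Real.sqrt s * (ρ / Real.sqrt s * n21 ω (rs Sᶜ v) + τ * (2 * η))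
          = ρ * n21 ω (rs Sᶜ v) + 2 * τ * Real.sqrt s * η := by
        field_simp
      calc n21 ω (rs S v) ≤ Real.sqrt s * l2 (rs S v) := h5
        _ ≤ Real.sqrt s * (ρ / Real.sqrt s * n21 ω (rs Sᶜ v) + τ * (2 * η)) :=
            mul_le_mul_of_nonneg_left h4 hsq.le
        _ = _ := h6
    have hkey : ∀ t : ℝ, (∃ z, wspar ω z ≤ s ∧ t = n21 ω (x - z)) →
        (1 - ρ) * n21 ω v ≤ 2 * (1 + ρ) * t + 4 * τ * Real.sqrt s * η := by
      rintro t ⟨z, hz, rfl⟩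
      obtain ⟨S, hSdef⟩ : ∃ S : Finset (Fin B), S = Finset.univ.filter (fun b => bn z b ≠ 0) :=
        ⟨_, rfl⟩
      have hwS : wCard ω S ≤ s := by
        have : wCard ω S = wspar ω z := by
          rw [hSdef, wCard, wspar, Finset.sum_filter]
          exact (Finset.sum_congr rfl fun b _ => by by_cases h : bn z b = 0 <;> simp [h]).symm
        rw [this]; exact hz
      have hscx : n21 ω (rs Sᶜ x) ≤ n21 ω (x - z) := by
        rw [n21_rs_eq]
        have step1 : ∑ b ∈ Sᶜ, ω b * bn x b ≤ ∑ b ∈ Sᶜ, ω b * bn (x - z) b := by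
          refine Finset.sum_le_sum fun b hb => ?_
          have hbz : bn z b = 0 := by
            have := Finset.mem_compl.mp hb
            simp only [hSdef, Finset.mem_filter, Finset.mem_univ, true_and, not_not] at this
            exact this
          have hxzz : x - z + z = x := by funext j; simp
          have htr := bn_triangle (x - z) z b
          rw [hxzz, hbz] at htr
          have hωb := hω b
          nlinarith [bn_nonneg (x - z) b]
        refine le_trans step1 ?_
        rw [n21]
        exact Finset.sum_le_sum_of_subset_of_nonneg (Finset.subset_univ _)
          (fun b _ _ => mul_nonneg (le_trans zero_le_one (hω b)) (bn_nonneg _ b))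
      have hxfeas : l2 (A.mulVec x - (A.mulVec x + e)) ≤ η := by
        have heq : A.mulVec x - (A.mulVec x + e) = -e := by
          funext i; simp only [Pi.sub_apply, Pi.add_apply, Pi.neg_apply]; ring
        rw [heq, l2_neg]; exact he
      have hminx : n21 ω xh ≤ n21 ω x := hmin x hxfeas
      have h2 := n21_split ω S xh
      have h3 := n21_split ω S x
      have h4 : n21 ω (rs S x) ≤ n21 ω (rs S xh) + n21 ω (rs S v) := by
        have heq : rs S x = rs S xh + rs S v := by
          rw [hv, rs_sub]; funext j; simp
        rw [heq]; exact n21_triangle ω hω _ _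
      have h5 : n21 ω (rs Sᶜ v) ≤ n21 ω (rs Sᶜ x) + n21 ω (rs Sᶜ xh) := by
        have heq : rs Sᶜ v = rs Sᶜ x + (-(rs Sᶜ xh)) := by
          rw [hv, rs_sub, sub_eq_add_neg]
        rw [heq]
        refine le_trans (n21_triangle ω hω _ _) ?_
        rw [n21_neg]
      have h6 : n21 ω (rs Sᶜ v) ≤ n21 ω (rs S v) + 2 * n21 ω (x - z) := by linarith
      have h7 := hNSP' S hwS
      have hsplitv := n21_split ω S v
      have e1 : (1 - ρ) * n21 ω (rs Sᶜ v)
          ≤ 2 * (τ * Real.sqrt s * η) + 2 * n21 ω (x - z) := by nlinarith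
      have e2 : n21 ω v ≤ (1 + ρ) * n21 ω (rs Sᶜ v) + 2 * (τ * Real.sqrt s * η) := by
        nlinarith
      have p1 := mul_le_mul_of_nonneg_left e1 h1ρ'
      have p2 := mul_le_mul_of_nonneg_left e2 h1ρ.le
      nlinarith [p1, p2]
    have hTne : Set.Nonempty {t | ∃ z, wspar ω z ≤ s ∧ t = n21 ω (x - z)} := by
      refine ⟨n21 ω (x - 0), 0, ?_, rfl⟩
      have : wspar ω (0 : ((b : Fin B) × Fin (d b)) → ℝ) = 0 := by
        rw [wspar]
        refine Finset.sum_eq_zero fun b _ => ?_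
        simp [bn]
      rw [this]; linarith
    have hl1' : (1 - ρ) * n21 ω v
        ≤ 2 * (1 + ρ) * sigmaS ω s x + 4 * τ * Real.sqrt s * η := by
      have hpos : (0:ℝ) < 2 * (1 + ρ) := by linarith
      have hle : ((1 - ρ) * n21 ω v - 4 * τ * Real.sqrt s * η) / (2 * (1 + ρ))
          ≤ sigmaS ω s x := by
        unfold sigmaS
        refine le_csInf hTne fun t ht => ?_
        rw [div_le_iff₀ hpos]
        have := hkey t ht
        linarith
      rw [div_le_iff₀ hpos] at hle
      linarith
    have hST : Real.sqrt s * l2 v ≤ (1 + ρ) * n21 ω v + 2 * τ * Real.sqrt s * η := by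
      by_cases hn0 : n21 ω v = 0
      · have hbz : ∀ b, bn v b = 0 := by
          intro b
          have hsum : ∑ b, ω b * bn v b = 0 := hn0
          have hz := (Finset.sum_eq_zero_iff_of_nonneg
            (fun b _ => mul_nonneg (le_trans zero_le_one (hω b)) (bn_nonneg v b))).mp
            hsum b (Finset.mem_univ b)
          rcases mul_eq_zero.mp hz with h | h
          · exfalso; linarith [hω b]
          · exact h
        have hl2 : l2 v = 0 := by
          have h2 : l2 v ^ 2 = 0 := by
            rw [l2_sq_blocks]
            exact Finset.sum_eq_zero fun b _ => by rw [hbz]; ring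
          exact pow_eq_zero_iff two_ne_zero |>.mp h2
        rw [hl2, hn0]
        have : (0:ℝ) ≤ 2 * τ * Real.sqrt s * η :=
          mul_nonneg (mul_nonneg (by linarith) hsq.le) hη0
        linarith
      · have hnpos : 0 < n21 ω v := lt_of_le_of_ne (n21_nonneg ω hω v) (Ne.symm hn0)
        obtain ⟨S, hSdef⟩ : ∃ S : Finset (Fin B),
            S = Finset.univ.filter (fun b => ω b * n21 ω v < s * bn v b) := ⟨_, rfl⟩
        have hωbn_le : ∑ b ∈ S, ω b * bn v b ≤ n21 ω v := by
          rw [n21]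
          exact Finset.sum_le_sum_of_subset_of_nonneg (Finset.subset_univ _)
            (fun b _ _ => mul_nonneg (le_trans zero_le_one (hω b)) (bn_nonneg v b))
        have hwS : wCard ω S ≤ s := by
          have hmul : n21 ω v * wCard ω S ≤ n21 ω v * s := by
            calc n21 ω v * wCard ω S = ∑ b ∈ S, n21 ω v * ω b ^ 2 := by
                  rw [wCard, Finset.mul_sum]
              _ ≤ ∑ b ∈ S, s * (ω b * bn v b) := by
                  refine Finset.sum_le_sum fun b hb => ?_
                  have hmem : ω b * n21 ω v < s * bn v b := by
                    have := hb
                    simp only [hSdef, Finset.mem_filter, Finset.mem_univ, true_and] at this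
                    exact this
                  have hωb := hω b
                  nlinarith
              _ = s * ∑ b ∈ S, ω b * bn v b := by rw [Finset.mul_sum]
              _ ≤ s * n21 ω v := mul_le_mul_of_nonneg_left hωbn_le hs0.le
              _ = n21 ω v * s := mul_comm _ _
          exact le_of_mul_le_mul_left hmul hnpos
        have htail : Real.sqrt s * l2 (rs Sᶜ v) ≤ n21 ω v := by
          have hScbn : ∑ b ∈ Sᶜ, ω b * bn v b ≤ n21 ω v := by
            rw [n21]
            exact Finset.sum_le_sum_of_subset_of_nonneg (Finset.subset_univ _)
              (fun b _ _ => mul_nonneg (le_trans zero_le_one (hω b)) (bn_nonneg v b))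
          have hsq2 : s * l2 (rs Sᶜ v) ^ 2 ≤ n21 ω v ^ 2 := by
            rw [l2_rs_sq_eq]
            calc s * ∑ b ∈ Sᶜ, bn v b ^ 2 = ∑ b ∈ Sᶜ, s * bn v b ^ 2 := by
                  rw [Finset.mul_sum]
              _ ≤ ∑ b ∈ Sᶜ, n21 ω v * (ω b * bn v b) := by
                  refine Finset.sum_le_sum fun b hb => ?_
                  have hmem : ¬ (ω b * n21 ω v < s * bn v b) := by
                    have := Finset.mem_compl.mp hb
                    simp only [hSdef, Finset.mem_filter, Finset.mem_univ, true_and] at this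
                    exact this
                  push_neg at hmem
                  nlinarith [bn_nonneg v b]
              _ = n21 ω v * ∑ b ∈ Sᶜ, ω b * bn v b := by rw [Finset.mul_sum]
              _ ≤ n21 ω v * n21 ω v := mul_le_mul_of_nonneg_left hScbn hnpos.le
              _ = n21 ω v ^ 2 := by ring
          have h2 : (Real.sqrt s * l2 (rs Sᶜ v)) ^ 2 ≤ n21 ω v ^ 2 := by
            rw [mul_pow, Real.sq_sqrt hs0.le]; exact hsq2
          nlinarith [mul_nonneg hsq.le (l2_nonneg (rs Sᶜ v)), hnpos.le]
        have h1 := hNSP v S hwS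
        have hA' : τ * l2 (A.mulVec v) ≤ τ * (2 * η) := mul_le_mul_of_nonneg_left hAv hτ.le
        have hSc_le : n21 ω (rs Sᶜ v) ≤ n21 ω v := n21_rs_le ω hω Sᶜ v
        have h2 : l2 (rs S v) ≤ ρ / Real.sqrt s * n21 ω v + 2 * τ * η := by
          have hmono : ρ / Real.sqrt s * n21 ω (rs Sᶜ v) ≤ ρ / Real.sqrt s * n21 ω v :=
            mul_le_mul_of_nonneg_left hSc_le (div_nonneg hρ0.le hsq.le)
          linarith
        have hS' : Real.sqrt s * l2 (rs S v) ≤ ρ * n21 ω v + 2 * τ * Real.sqrt s * η := by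
          have hcalc : Real.sqrt s * (ρ / Real.sqrt s * n21 ω v + 2 * τ * η)
              = ρ * n21 ω v + 2 * τ * Real.sqrt s * η := by
            field_simp
          calc Real.sqrt s * l2 (rs S v)
              ≤ Real.sqrt s * (ρ / Real.sqrt s * n21 ω v + 2 * τ * η) :=
                mul_le_mul_of_nonneg_left h2 hsq.le
            _ = _ := hcalc
        have hsplit' : Real.sqrt s * l2 v
            ≤ Real.sqrt s * l2 (rs S v) + Real.sqrt s * l2 (rs Sᶜ v) := by
          rw [← mul_add]
          exact mul_le_mul_of_nonneg_left (l2_split_le S v) hsq.le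
        linarith
    constructor
    · have hrhs : 2 * ((1 + ρ) ^ 2 / (1 - ρ)) * sigmaS ω s x
          + 2 * (τ * (3 + ρ) / (1 - ρ)) * Real.sqrt s * η
          = (2 * (1 + ρ) ^ 2 * sigmaS ω s x + 2 * τ * (3 + ρ) * Real.sqrt s * η) / (1 - ρ) := by
        rw [add_div]
        ring
      rw [hrhs, le_div_iff₀ h1ρ]
      nlinarith [hl1', mul_nonneg hσ0 hρ0.le,
        mul_nonneg (mul_nonneg (mul_nonneg hτ.le hsq.le) hη0) hρ0.le,
        mul_nonneg (mul_nonneg hτ.le hsq.le) hη0]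
    · have hrhs : 2 * ((1 + ρ) ^ 2 / (1 - ρ)) * sigmaS ω s x / Real.sqrt s
          + 2 * (τ * (3 + ρ) / (1 - ρ)) * η
          = (2 * (1 + ρ) ^ 2 * sigmaS ω s x + 2 * τ * (3 + ρ) * Real.sqrt s * η)
            / ((1 - ρ) * Real.sqrt s) := by
        rw [eq_div_iff (by positivity : (1 - ρ) * Real.sqrt s ≠ 0)]
        field_simp
      rw [hrhs, le_div_iff₀ (mul_pos h1ρ hsq)]
      have p1 := mul_le_mul_of_nonneg_left hST h1ρ.le
      have p2 := mul_le_mul_of_nonneg_left hl1' h1ρ'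
      nlinarith [p1, p2]
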